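/- The erasure-adjusted error polynomial Ê(x) = Λ_ρ(x)E(x) satisfies a key equation A(x)M_n(x) = Λ_τ(x)Ê(x) for some polynomial A(x) ∈ F[x] with deg A < deg Λ_ρ + deg Λ_τ. -/

import Mathlib

open Polynomial

open scoped Classical

/-- Key equation I: with `Ê = Λ_ρ · E`, there exists `A` with
`A · M_n = Λ_τ · Ê` and `deg A < deg Λ_ρ + deg Λ_τ`. -/
theorem stmt_6 {F : Type*} [Field F] (n : ℕ)
    (m : Fin n → F[X]) (hm : ∀ i, (m i).Monic) (hirr : ∀ i, Irreducible (m i))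
    (hinj : Function.Injective m)
    (E : F[X]) (hEdeg : E.degree < (∏ i, m i).degree)
    (Sρ Sτ : Finset (Fin n)) (hdisj : Disjoint Sρ Sτ)
    (hsupp : Finset.univ.filter (fun i => ¬ m i ∣ E) = Sρ ∪ Sτ) :
    ∃ A : F[X],
      A * ∏ i, m i = (∏ i ∈ Sτ, m i) * ((∏ i ∈ Sρ, m i) * E) ∧
      A.degree < (∏ i ∈ Sρ, m i).degree + (∏ i ∈ Sτ, m i).degree := by
  have hmono : ∀ s : Finset (Fin n), (∏ i ∈ s, m i).Monic :=
    fun s => monic_prod_of_monic _ _ fun i _ => hm i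
  have hρ := hmono Sρ
  have hτ := hmono Sτ
  by_cases hE : E = 0
  · refine ⟨0, by simp [hE], ?_⟩
    rw [degree_zero]
    exact bot_lt_iff_ne_bot.mpr (WithBot.add_ne_bot.mpr
      ⟨degree_ne_bot.mpr hρ.ne_zero, degree_ne_bot.mpr hτ.ne_zero⟩)
  -- the complement positions divide E
  set T : Finset (Fin n) := Finset.univ \ (Sρ ∪ Sτ) with hT
  have hdvdE : ∀ i ∈ T, m i ∣ E := by
    intro i hi
    rw [hT, Finset.mem_sdiff, ← hsupp] at hi
    have := hi.2
    simp only [Finset.mem_filter, Finset.mem_univ, true_and] at this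
    exact not_not.mp this
  have hpair : (T : Set (Fin n)).Pairwise (Function.onFun IsCoprime m) := by
    intro i _ j _ hij
    rcases or_iff_not_imp_right.mpr (hirr i).coprime_iff_not_dvd.mpr with h | h
    · exact h
    · exfalso
      exact hij (hinj (Polynomial.eq_of_monic_of_associated (hm i) (hm j)
        (associated_of_dvd_dvd h (((hirr i).associated_of_dvd (hirr j) h).symm.dvd))))
  have hprodT : (∏ i ∈ T, m i) ∣ E := Finset.prod_dvd_of_coprime hpair hdvdE
  obtain ⟨Q, hQ⟩ := hprodT
  have hsplit : (∏ i, m i) = (∏ i ∈ Sρ ∪ Sτ, m i) * ∏ i ∈ T, m i := by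
    rw [hT, ← Finset.prod_union (Finset.disjoint_sdiff), Finset.union_sdiff_of_subset
      (Finset.subset_univ _)]
  have hkey : Q * ∏ i, m i = (∏ i ∈ Sτ, m i) * ((∏ i ∈ Sρ, m i) * E) := by
    rw [hsplit, Finset.prod_union hdisj, hQ]; ring
  refine ⟨Q, hkey, ?_⟩
  have hMn : (∏ i, m i) ≠ 0 := (hmono Finset.univ).ne_zero
  rw [← WithBot.add_lt_add_iff_right (degree_ne_bot.mpr hMn), ← degree_mul, hkey,
    degree_mul, degree_mul]
  have h1 : (∏ i ∈ Sρ, m i).degree + (∏ i ∈ Sτ, m i).degree + (∏ i, m i).degree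
      = (∏ i ∈ Sτ, m i).degree + ((∏ i ∈ Sρ, m i).degree + (∏ i, m i).degree) := by ring
  rw [h1, WithBot.add_lt_add_iff_left (degree_ne_bot.mpr hτ.ne_zero),
    WithBot.add_lt_add_iff_left (degree_ne_bot.mpr hρ.ne_zero)]
  exact hEdeg
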